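/- Let p ≥ 1, 1 ≤ q < p, k ≥ 1, let α : Fin k → ℝ with α j > 0 and ∑ j, α j = 1, and let t : Fin k → (Fin p → ℝ) be group centers satisfying t j i = 0 for all j and all coordinates i > q. Let μ = ∑ j, α j • N(t j, I_p) be the Gaussian mixture on Fin p → ℝ with mean m, assume COV μ is invertible, and write B = (COV μ)⁻¹ and xᶜ_a = x a − m a. Then for all indices m', s ≤ q, COV4(μ)_{m' s} = (1/(p+2)) · [ ∑_{i ≤ q} ∑_{j ≤ q} B_{i j} · ∫ xᶜ_{m'} xᶜ_s xᶜ_i xᶜ_j dμ + (p − q) · ∫ xᶜ_{m'} xᶜ_s dμ ]. -/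

import Mathlib

open MeasureTheory ProbabilityTheory Matrix

/-- The mean vector of a measure on `Fin p → ℝ`. -/
noncomputable def meanVec {p : ℕ} (μ : Measure (Fin p → ℝ)) : Fin p → ℝ :=
  fun a => ∫ x, x a ∂μ

/-- The covariance matrix `COV(μ)` with entries `∫ (x a − m a)(x b − m b) dμ`. -/
noncomputable def COV {p : ℕ} (μ : Measure (Fin p → ℝ)) : Matrix (Fin p) (Fin p) ℝ :=
  Matrix.of fun a b => ∫ x, (x a - meanVec μ a) * (x b - meanVec μ b) ∂μ

/-- The fourth-order scatter matrix `COV4(μ)` with entries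
`(1/(p+2)) ∫ ((x−m)ᵀ (COV μ)⁻¹ (x−m)) (x a − m a)(x b − m b) dμ`. -/
noncomputable def COV4 {p : ℕ} (μ : Measure (Fin p → ℝ)) : Matrix (Fin p) (Fin p) ℝ :=
  Matrix.of fun a b =>
    (1 / ((p : ℝ) + 2)) *
      ∫ x, (dotProduct (fun i => x i - meanVec μ i)
          ((COV μ)⁻¹.mulVec fun i => x i - meanVec μ i)) *
        ((x a - meanVec μ a) * (x b - meanVec μ b)) ∂μ

/-- The product Gaussian measure `N(t, I_p)` on `Fin p → ℝ`. -/
noncomputable def gaussPi (p : ℕ) (t : Fin p → ℝ) : Measure (Fin p → ℝ) :=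
  Measure.pi fun i => gaussianReal (t i) 1

section Cov4AuxSection
open Real Filter

namespace Cov4Aux

lemma int_pow_exp {b : ℝ} (hb : 0 < b) (n : ℕ) :
    Integrable (fun x : ℝ => x ^ n * Real.exp (-b * x ^ 2)) := by
  have : (-1 : ℝ) < n := lt_of_lt_of_le (by norm_num) (Nat.cast_nonneg n)
  simpa [Real.rpow_natCast] using integrable_rpow_mul_exp_neg_mul_sq hb this

lemma gauss_eq (c : ℝ) : gaussianReal c 1 = volume.withDensity (gaussianPDF c 1) :=
  gaussianReal_of_var_ne_zero c one_ne_zero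

lemma integrable_gauss_iff (c : ℝ) (g : ℝ → ℝ) :
    Integrable g (gaussianReal c 1) ↔
      Integrable (fun x => g x * gaussianPDFReal c 1 x) volume := by
  rw [gauss_eq, integrable_withDensity_iff (measurable_gaussianPDF c 1)
    (Eventually.of_forall fun x => ENNReal.ofReal_lt_top)]
  simp only [gaussianPDF_def, ENNReal.toReal_ofReal (gaussianPDFReal_nonneg c 1 _)]

lemma integral_gauss_eq (c : ℝ) (g : ℝ → ℝ) :
    ∫ y, g y ∂gaussianReal c 1 = ∫ y, gaussianPDFReal c 1 y * g y := by
  rw [gauss_eq]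
  have h1 : gaussianPDF c 1 = fun x => ((gaussianPDFReal c 1 x).toNNReal : ENNReal) := by
    funext x; rfl
  rw [h1, integral_withDensity_eq_integral_smul
    ((measurable_gaussianPDFReal c 1).real_toNNReal) g]
  congr 1
  funext x
  simp [NNReal.smul_def, Real.coe_toNNReal _ (gaussianPDFReal_nonneg c 1 x)]

lemma pdf_one (c x : ℝ) :
    gaussianPDFReal c 1 x = (Real.sqrt (2 * π))⁻¹ * Real.exp (-(1/2) * (x - c) ^ 2) := by
  rw [gaussianPDFReal]
  push_cast
  rw [mul_one]
  congr 1
  ring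

lemma integrable_pow_gauss (c : ℝ) (n : ℕ) :
    Integrable (fun y : ℝ => y ^ n) (gaussianReal c 1) := by
  rw [integrable_gauss_iff]
  have key : ∀ x : ℝ, x ^ n * gaussianPDFReal c 1 x =
      (fun y => (y + c) ^ n * ((Real.sqrt (2 * π))⁻¹ * Real.exp (-(1/2) * y ^ 2))) (x - c) := by
    intro x
    simp only [pdf_one, sub_add_cancel]
  simp only [key]
  apply Integrable.comp_sub_right (f := fun y =>
    (y + c) ^ n * ((Real.sqrt (2 * π))⁻¹ * Real.exp (-(1/2) * y ^ 2)))
  have : ∀ y : ℝ, (y + c) ^ n * ((Real.sqrt (2 * π))⁻¹ * Real.exp (-(1/2) * y ^ 2)) =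
      ∑ m ∈ Finset.range (n + 1),
        ((Real.sqrt (2 * π))⁻¹ * (c ^ (n - m) * (n.choose m : ℝ))) *
          (y ^ m * Real.exp (-(1/2) * y ^ 2)) := by
    intro y
    rw [add_pow, Finset.sum_mul]
    congr 1; funext m; ring
  simp only [this]
  apply integrable_finset_sum
  intro m _
  exact (int_pow_exp (by norm_num) m).const_mul _

end Cov4Aux

namespace Cov4Aux

lemma gauss_mean_zero : ∫ y, y ∂gaussianReal 0 1 = 0 := by
  have hmap : (gaussianReal 0 1).map (fun x => (-1 : ℝ) * x)
      = gaussianReal 0 1 := by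
    have := gaussianReal_map_const_mul (μ := 0) (v := 1) (-1 : ℝ)
    simpa using this
  have hint : Integrable (fun y : ℝ => y) (gaussianReal 0 1) := by
    simpa using integrable_pow_gauss 0 1
  have h1 : ∫ y, y ∂gaussianReal 0 1
      = ∫ y, (-1 : ℝ) * y ∂gaussianReal 0 1 := by
    conv_lhs => rw [← hmap]
    rw [integral_map (by fun_prop) measurable_id'.aestronglyMeasurable]
  have := h1
  simp only [neg_one_mul] at this
  rw [MeasureTheory.integral_neg] at this
  linarith

lemma gauss_map_shift (c v : ℝ) :
    (gaussianReal c 1).map (fun y => y + v) = gaussianReal (c + v) 1 :=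
  gaussianReal_map_add_const v

lemma gauss_mean (c : ℝ) : ∫ y, y ∂gaussianReal c 1 = c := by
  have := gauss_map_shift 0 c
  rw [zero_add] at this
  rw [← this, integral_map (by fun_prop) measurable_id'.aestronglyMeasurable]
  have hint : Integrable (fun y : ℝ => y) (gaussianReal 0 1) := by
    simpa using integrable_pow_gauss 0 1
  rw [integral_add hint (integrable_const c)]
  simp [gauss_mean_zero]

lemma integral_sq_exp : ∫ y : ℝ, y ^ 2 * Real.exp (-(1/2) * y ^ 2) = Real.sqrt (2 * π) := by
  set F : ℝ → ℝ := fun y => -y * Real.exp (-(1/2) * y ^ 2) with hF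
  set F' : ℝ → ℝ := fun y => y ^ 2 * Real.exp (-(1/2) * y ^ 2)
      - Real.exp (-(1/2) * y ^ 2) with hF'
  have hderiv : ∀ y : ℝ, HasDerivAt F (F' y) y := by
    intro y
    have h1 : HasDerivAt (fun y : ℝ => Real.exp (-(1/2) * y ^ 2))
        (Real.exp (-(1/2) * y ^ 2) * (-(1/2) * (2 * y ^ 1))) y :=
      ((hasDerivAt_pow 2 y).const_mul (-(1/2 : ℝ))).exp
    have h2 : HasDerivAt (fun y : ℝ => -y) (-1 : ℝ) y := (hasDerivAt_id y).neg
    have : HasDerivAt (fun y : ℝ => -y * Real.exp (-(1/2) * y ^ 2))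
        (-1 * Real.exp (-(1/2) * y ^ 2) + -y * (Real.exp (-(1/2) * y ^ 2) * (-(1/2) * (2 * y ^ 1)))) y :=
      h2.mul h1
    convert this using 1
    simp only [hF', pow_one]
    ring
  have hg : Tendsto (fun y : ℝ => y * Real.exp (-(1/2) * y ^ 2)) atTop (nhds 0) := by
    have hlo := rpow_mul_exp_neg_mul_sq_isLittleO_exp_neg (b := (1/2 : ℝ)) (by norm_num) 1
    simp only [Real.rpow_one] at hlo
    have hhalf : Tendsto (fun x : ℝ => -(1/2 : ℝ) * x) atTop atBot :=
      Filter.tendsto_id.const_mul_atTop_of_neg (by norm_num)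
    have htail : Tendsto (fun x : ℝ => Real.exp (-(1/2 : ℝ) * x)) atTop (nhds 0) :=
      Real.tendsto_exp_atBot.comp hhalf
    exact hlo.isBigO.trans_tendsto htail
  have htop : Tendsto F atTop (nhds 0) := by
    have := hg.neg
    simpa [hF, neg_mul] using this
  have hbot : Tendsto F atBot (nhds 0) := by
    have hcomp : Tendsto (fun y : ℝ => (fun z : ℝ => z * Real.exp (-(1/2) * z ^ 2)) (-y))
        atBot (nhds 0) := hg.comp tendsto_neg_atBot_atTop
    have : (fun y : ℝ => (fun z : ℝ => z * Real.exp (-(1/2) * z ^ 2)) (-y)) = F := by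
      funext y; simp [hF]
    rwa [this] at hcomp
  have hint1 : Integrable (fun y : ℝ => Real.exp (-(1/2) * y ^ 2)) :=
    integrable_exp_neg_mul_sq (by norm_num)
  have hintF' : Integrable F' := by
    apply Integrable.sub _ hint1
    exact int_pow_exp (by norm_num) 2
  have hres := integral_of_hasDerivAt_of_tendsto hderiv hintF' hbot htop
  rw [sub_zero] at hres
  have hsub : ∫ y : ℝ, F' y
      = (∫ y : ℝ, y ^ 2 * Real.exp (-(1/2) * y ^ 2)) - ∫ y : ℝ, Real.exp (-(1/2) * y ^ 2) := by
    exact integral_sub (int_pow_exp (by norm_num) 2) hint1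
  have hgauss : ∫ y : ℝ, Real.exp (-(1/2) * y ^ 2) = Real.sqrt (2 * π) := by
    rw [integral_gaussian]
    congr 1
    rw [div_div_eq_mul_div, div_one]
    ring
  rw [hres] at hsub
  linarith [hsub]

lemma gauss_sq : ∫ y : ℝ, y ^ 2 ∂gaussianReal 0 1 = 1 := by
  rw [integral_gauss_eq]
  have : ∀ y : ℝ, gaussianPDFReal 0 1 y * y ^ 2
      = (Real.sqrt (2 * π))⁻¹ * (y ^ 2 * Real.exp (-(1/2) * y ^ 2)) := by
    intro y
    rw [pdf_one]
    ring_nf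
  simp only [this]
  rw [integral_const_mul, integral_sq_exp]
  rw [inv_mul_cancel₀]
  positivity

end Cov4Aux

namespace Cov4Aux

lemma integrable_shift_pow_gauss (c v : ℝ) (n : ℕ) :
    Integrable (fun y : ℝ => (y - v) ^ n) (gaussianReal c 1) := by
  have hmap : (gaussianReal c 1).map (fun y => y + (-v)) = gaussianReal (c + (-v)) 1 :=
    gauss_map_shift c (-v)
  have h := integrable_pow_gauss (c + (-v)) n
  rw [← hmap, integrable_map_measure (by fun_prop) (by fun_prop)] at h
  simpa [Function.comp_def, sub_eq_add_neg] using h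

lemma integral_shift_pow_gauss (c v : ℝ) (n : ℕ) :
    ∫ y, (y - v) ^ n ∂gaussianReal c 1 = ∫ y, y ^ n ∂gaussianReal (c - v) 1 := by
  have hmap : (gaussianReal c 1).map (fun y => y + (-v)) = gaussianReal (c + (-v)) 1 :=
    gauss_map_shift c (-v)
  rw [sub_eq_add_neg, ← hmap, integral_map (by fun_prop) (by fun_prop)]
  simp [sub_eq_add_neg]

lemma integral_shift_one_gauss (c v : ℝ) :
    ∫ y, (y - v) ^ 1 ∂gaussianReal c 1 = c - v := by
  rw [integral_shift_pow_gauss]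
  simpa using gauss_mean (c - v)

lemma integral_shift_sq_gauss :
    ∫ y : ℝ, (y - 0) ^ 2 ∂gaussianReal 0 1 = 1 := by
  rw [integral_shift_pow_gauss]
  simpa using gauss_sq

lemma integrable_fin_pi : ∀ {n : ℕ} (μ : Fin n → Measure ℝ),
    (∀ i, SigmaFinite (μ i)) → ∀ (f : Fin n → ℝ → ℝ), (∀ i, Integrable (f i) (μ i)) →
    Integrable (fun x : Fin n → ℝ => ∏ i, f i (x i)) (Measure.pi μ) := by
  intro n
  induction n with
  | zero =>
      intro μ _ f _
      simp only [Finset.univ_eq_empty, Finset.prod_empty]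
      have : (Measure.pi μ) Set.univ = 1 := by
        rw [Measure.pi_univ]; simp
      rw [integrable_const_iff]
      right
      refine ⟨?_⟩; rw [this]
      exact ENNReal.one_lt_top
  | succ n ih =>
      intro μ hsf f hf
      haveI := hsf
      have hmp := (measurePreserving_piFinSuccAbove μ 0).symm
      rw [← hmp.integrable_comp_emb (MeasurableEquiv.measurableEmbedding _)]
      simp_rw [MeasurableEquiv.piFinSuccAbove_symm_apply, Fin.insertNthEquiv,
        Fin.prod_univ_succ, Fin.insertNth_zero]
      simp only [Fin.zero_succAbove, cast_eq, Function.comp_def, Equiv.coe_fn_mk,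
        Fin.cons_zero, Fin.cons_succ]
      have h2 : Integrable (fun x : Fin n → ℝ => ∏ i, f i.succ (x i))
          (Measure.pi fun i => μ i.succ) := ih _ (fun i => hsf _) _ (fun i => hf _)
      exact Integrable.mul_prod (hf 0) h2

lemma integral_fin_pi : ∀ {n : ℕ} (μ : Fin n → Measure ℝ),
    (∀ i, SigmaFinite (μ i)) → ∀ (f : Fin n → ℝ → ℝ),
    ∫ x, ∏ i, f i (x i) ∂Measure.pi μ = ∏ i, ∫ y, f i y ∂μ i := by
  intro n
  induction n with
  | zero =>
      intro μ _ f
      simp only [Finset.univ_eq_empty, Finset.prod_empty, integral_const]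
      rw [measureReal_def, Measure.pi_univ]
      simp
  | succ n ih =>
      intro μ hsf f
      haveI := hsf
      calc
        _ = ∫ x : ℝ × (Fin n → ℝ),
            f 0 x.1 * ∏ i : Fin n, f (Fin.succ i) (x.2 i)
              ∂(μ 0).prod (Measure.pi fun i => μ i.succ) := by
          rw [← ((measurePreserving_piFinSuccAbove μ 0).symm).integral_comp']
          simp_rw [MeasurableEquiv.piFinSuccAbove_symm_apply, Fin.insertNthEquiv,
            Fin.prod_univ_succ, Fin.insertNth_zero, Equiv.coe_fn_mk,
            Fin.zero_succAbove, cast_eq, Fin.cons_zero, Fin.cons_succ]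
        _ = (∫ y, f 0 y ∂μ 0) * ∏ i : Fin n, ∫ y, f i.succ y ∂μ i.succ := by
          rw [← ih _ (fun i => hsf _), ← integral_prod_mul]
        _ = ∏ i, ∫ y, f i y ∂μ i := by rw [Fin.prod_univ_succ]

lemma pi_gauss {p : ℕ} (c : Fin p → ℝ) (g : Fin p → ℝ → ℝ)
    (hg : ∀ i, Integrable (g i) (gaussianReal (c i) 1)) :
    Integrable (fun x : Fin p → ℝ => ∏ i, g i (x i)) (gaussPi p c) ∧
      ∫ x, ∏ i, g i (x i) ∂gaussPi p c = ∏ i, ∫ y, g i y ∂gaussianReal (c i) 1 := by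
  constructor
  · exact integrable_fin_pi _ (fun i => inferInstance) g hg
  · exact integral_fin_pi _ (fun i => inferInstance) g

end Cov4Aux

namespace Cov4Aux

lemma prod_count {p : ℕ} (f : Fin p → ℝ) (L : List (Fin p)) :
    (L.map f).prod = ∏ c, f c ^ (L.count c) := by
  rw [Finset.prod_list_map_count]
  refine Finset.prod_subset (Finset.subset_univ _) ?_
  intro x _ hx
  rw [List.mem_toFinset] at hx
  rw [List.count_eq_zero_of_not_mem hx, pow_zero]

lemma filter_lt_card {p q : ℕ} (hqp : q ≤ p) :
    (Finset.univ.filter (fun i : Fin p => (i : ℕ) < q)).card = q := by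
  have : Finset.univ.filter (fun i : Fin p => (i : ℕ) < q)
      = Finset.univ.map (Fin.castLEEmb hqp) := by
    ext i
    simp only [Finset.mem_filter, Finset.mem_univ, true_and, Finset.mem_map,
      Fin.castLEEmb_apply]
    constructor
    · intro hi
      exact ⟨⟨(i : ℕ), hi⟩, by ext; simp⟩
    · rintro ⟨a, rfl⟩
      simp [a.isLt]
  rw [this, Finset.card_map, Finset.card_univ, Fintype.card_fin]

lemma filter_not_lt_card {p q : ℕ} (hqp : q ≤ p) :
    (Finset.univ.filter (fun i : Fin p => ¬ (i : ℕ) < q)).card = p - q := by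
  have h := Finset.card_filter_add_card_filter_not
    (s := (Finset.univ : Finset (Fin p))) (p := fun i : Fin p => (i : ℕ) < q)
  rw [filter_lt_card hqp, Finset.card_univ, Fintype.card_fin] at h
  omega

end Cov4Aux


end Cov4AuxSection

/-- Expression for the upper-left block entries of `COV4(μ)` of a Gaussian mixture whose
group centers vanish on the last `p − q` coordinates: for indices `m'`, `s` among the first
`q` coordinates,
`COV4(μ)_{m' s} = (1/(p+2)) [ ∑_{i,j ≤ q} B_{i j} E[xᶜ_{m'} xᶜ_s xᶜ_i xᶜ_j]
  + (p − q) E[xᶜ_{m'} xᶜ_s] ]` with `B = (COV μ)⁻¹`. -/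
theorem cov4_gaussian_mixture_upper_block (p q k : ℕ) (hq1 : 1 ≤ q) (hqp : q < p)
    (hk : 1 ≤ k)
    (α : Fin k → ℝ) (hα : ∀ j, 0 < α j) (hsum : ∑ j, α j = 1)
    (t : Fin k → Fin p → ℝ)
    (ht : ∀ j, ∀ i : Fin p, q ≤ (i : ℕ) → t j i = 0)
    (μ : Measure (Fin p → ℝ))
    (hμ : μ = ∑ j, ENNReal.ofReal (α j) • gaussPi p (t j))
    (hinv : IsUnit (COV μ)) :
    ∀ m' s : Fin p, (m' : ℕ) < q → (s : ℕ) < q →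
      COV4 μ m' s = (1 / ((p : ℝ) + 2)) *
        ((∑ i ∈ Finset.univ.filter (fun i : Fin p => (i : ℕ) < q),
            ∑ j ∈ Finset.univ.filter (fun j : Fin p => (j : ℕ) < q),
              (COV μ)⁻¹ i j *
                ∫ x, (x m' - meanVec μ m') * (x s - meanVec μ s) *
                  (x i - meanVec μ i) * (x j - meanVec μ j) ∂μ) +
          ((p : ℝ) - (q : ℝ)) *
            ∫ x, (x m' - meanVec μ m') * (x s - meanVec μ s) ∂μ) := by
  intro m' s hm' hs
  set v : Fin p → ℝ := meanVec μ with hv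
  -- mixture integrability and integral decomposition
  have hmixInt : ∀ f : (Fin p → ℝ) → ℝ,
      (∀ j, Integrable f (gaussPi p (t j))) → Integrable f μ := by
    intro f hf
    rw [hμ, MeasureTheory.integrable_finset_sum_measure]
    intro j _
    exact (hf j).smul_measure ENNReal.ofReal_ne_top
  have hmixVal : ∀ f : (Fin p → ℝ) → ℝ,
      (∀ j, Integrable f (gaussPi p (t j))) →
      ∫ x, f x ∂μ = ∑ j, α j * ∫ x, f x ∂gaussPi p (t j) := by
    intro f hf
    rw [hμ, integral_finset_sum_measure (fun j _ => (hf j).smul_measure ENNReal.ofReal_ne_top)]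
    refine Finset.sum_congr rfl fun j _ => ?_
    rw [integral_smul_measure, ENNReal.toReal_ofReal (hα j).le, smul_eq_mul]
  have hIntγ : ∀ (w : Fin p → ℝ) (L : List (Fin p)) (j : Fin k),
      Integrable (fun x : Fin p → ℝ => ∏ c, (x c - w c) ^ (L.count c)) (gaussPi p (t j)) :=
    fun w L j => (Cov4Aux.pi_gauss (t j) (fun c y => (y - w c) ^ (L.count c))
      (fun c => Cov4Aux.integrable_shift_pow_gauss _ _ _)).1
  have hIntμ : ∀ (w : Fin p → ℝ) (L : List (Fin p)),
      Integrable (fun x : Fin p → ℝ => ∏ c, (x c - w c) ^ (L.count c)) μ :=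
    fun w L => hmixInt _ (hIntγ w L)
  have hval : ∀ (w : Fin p → ℝ) (L : List (Fin p)),
      ∫ x, ∏ c, (x c - w c) ^ (L.count c) ∂μ
        = ∑ j, α j * ∏ c, ∫ y, (y - w c) ^ (L.count c) ∂gaussianReal (t j c) 1 := by
    intro w L
    rw [hmixVal _ (hIntγ w L)]
    refine Finset.sum_congr rfl fun j _ => ?_
    rw [(Cov4Aux.pi_gauss (t j) (fun c y => (y - w c) ^ (L.count c))
      (fun c => Cov4Aux.integrable_shift_pow_gauss _ _ _)).2]
  -- the mean vanishes on coordinates ≥ q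
  have hm0 : ∀ i : Fin p, q ≤ (i : ℕ) → v i = 0 := by
    intro i hi
    have hfun : (fun x : Fin p → ℝ => x i)
        = fun x => ∏ c, (x c - (0 : ℝ)) ^ (((i :: []) : List (Fin p)).count c) := by
      funext x
      have e := Cov4Aux.prod_count (fun c => x c - 0) (i :: [])
      rw [← e]
      simp
    have h1 : v i = ∫ x, ∏ c, (x c - (0 : ℝ)) ^ (((i :: []) : List (Fin p)).count c) ∂μ := by
      rw [hv]
      show (∫ x, x i ∂μ) = _
      rw [hfun]
    rw [h1, hval]
    refine Finset.sum_eq_zero fun j _ => ?_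
    rw [Finset.prod_eq_zero (Finset.mem_univ i)]
    · ring
    · have hc1 : ((i :: []) : List (Fin p)).count i = 1 := by simp
      rw [hc1, Cov4Aux.integral_shift_one_gauss, ht j i hi, sub_zero]
  -- covariance entries with one index ≥ q
  have hE2 : ∀ a b : Fin p, q ≤ (b : ℕ) → COV μ a b = if a = b then 1 else 0 := by
    intro a b hb
    have hfun : (fun x : Fin p → ℝ => (x a - v a) * (x b - v b))
        = fun x => ∏ c, (x c - v c) ^ (((a :: b :: []) : List (Fin p)).count c) := by
      funext x
      have e := Cov4Aux.prod_count (fun c => x c - v c) (a :: b :: [])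
      rw [← e]
      simp
    have hCOV : COV μ a b = ∫ x, ∏ c, (x c - v c) ^ (((a :: b :: []) : List (Fin p)).count c) ∂μ := by
      show (∫ x, (x a - v a) * (x b - v b) ∂μ) = _
      rw [hfun]
    rw [hCOV, hval]
    by_cases hab : a = b
    · subst hab
      rw [if_pos rfl]
      have hprod : ∀ j : Fin k, (∏ c, ∫ y, (y - v c) ^ (((a :: a :: []) : List (Fin p)).count c)
          ∂gaussianReal (t j c) 1) = 1 := by
        intro j
        refine Finset.prod_eq_one fun c _ => ?_
        by_cases hca : c = a
        · subst hca
          have h2 : ((c :: c :: []) : List (Fin p)).count c = 2 := by simp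
          rw [h2, hm0 c hb, ht j c hb]
          exact Cov4Aux.integral_shift_sq_gauss
        · have h0 : ((a :: a :: []) : List (Fin p)).count c = 0 := by
            simp [List.count_cons, hca, Ne.symm hca]
          rw [h0]
          simp
      simp [hprod, hsum]
    · simp only [if_neg hab]
      refine Finset.sum_eq_zero fun j _ => ?_
      rw [Finset.prod_eq_zero (Finset.mem_univ b)]
      · ring
      · have h1 : ((a :: b :: []) : List (Fin p)).count b = 1 := by
          simp [List.count_cons, Ne.symm hab, hab]
        rw [h1, Cov4Aux.integral_shift_one_gauss, hm0 b hb, ht j b hb, sub_zero]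
  have hCOVsymm : ∀ a b : Fin p, COV μ a b = COV μ b a := by
    intro a b
    show (∫ x, (x a - v a) * (x b - v b) ∂μ) = ∫ x, (x b - v b) * (x a - v a) ∂μ
    congr 1
    funext x
    ring
  have hdet : IsUnit (COV μ).det := (Matrix.isUnit_iff_isUnit_det _).mp hinv
  have hBA : (COV μ)⁻¹ * COV μ = 1 := Matrix.nonsing_inv_mul _ hdet
  have hAB : COV μ * (COV μ)⁻¹ = 1 := Matrix.mul_nonsing_inv _ hdet
  have hBcol : ∀ i j : Fin p, q ≤ (j : ℕ) → (COV μ)⁻¹ i j = if i = j then 1 else 0 := by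
    intro i j hj
    have h1 : ((COV μ)⁻¹ * COV μ) i j = (COV μ)⁻¹ i j := by
      rw [Matrix.mul_apply]
      have hterm : ∀ l : Fin p, (COV μ)⁻¹ i l * COV μ l j
          = if l = j then (COV μ)⁻¹ i l else 0 := by
        intro l
        rw [hE2 l j hj]
        split_ifs <;> simp
      simp only [hterm]
      rw [Finset.sum_ite_eq' Finset.univ j (fun l => (COV μ)⁻¹ i l)]
      simp
    rw [hBA, Matrix.one_apply] at h1
    exact h1.symm
  have hBrow : ∀ i j : Fin p, q ≤ (i : ℕ) → (COV μ)⁻¹ i j = if i = j then 1 else 0 := by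
    intro i j hi
    have h1 : (COV μ * (COV μ)⁻¹) i j = (COV μ)⁻¹ i j := by
      rw [Matrix.mul_apply]
      have hterm : ∀ l : Fin p, COV μ i l * (COV μ)⁻¹ l j
          = if l = i then (COV μ)⁻¹ l j else 0 := by
        intro l
        rw [hCOVsymm i l, hE2 l i hi]
        split_ifs <;> simp
      simp only [hterm]
      rw [Finset.sum_ite_eq' Finset.univ i (fun l => (COV μ)⁻¹ l j)]
      simp
    rw [hAB, Matrix.one_apply] at h1
    exact h1.symm
  -- fourth moments with a repeated high index reduce to second moments
  have hF1 : ∀ i : Fin p, q ≤ (i : ℕ) →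
      ∫ x, ∏ c, (x c - v c) ^ (((i :: i :: m' :: s :: []) : List (Fin p)).count c) ∂μ
        = ∫ x, ∏ c, (x c - v c) ^ (((m' :: s :: []) : List (Fin p)).count c) ∂μ := by
    intro i hi
    have him : i ≠ m' := by intro h; rw [h] at hi; omega
    have his : i ≠ s := by intro h; rw [h] at hi; omega
    rw [hval, hval]
    refine Finset.sum_congr rfl fun j _ => ?_
    congr 1
    refine Finset.prod_congr rfl fun c _ => ?_
    by_cases hci : c = i
    · subst hci
      have h2 : ((c :: c :: m' :: s :: []) : List (Fin p)).count c = 2 := by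
        simp [List.count_cons, him, his, Ne.symm him, Ne.symm his]
      have h0 : ((m' :: s :: []) : List (Fin p)).count c = 0 := by
        simp [List.count_cons, him, his, Ne.symm him, Ne.symm his]
      rw [h2, h0, hm0 c hi, ht j c hi, Cov4Aux.integral_shift_sq_gauss]
      simp
    · have hcc : ((i :: i :: m' :: s :: []) : List (Fin p)).count c
          = ((m' :: s :: []) : List (Fin p)).count c := by
        simp [List.count_cons, hci, Ne.symm hci]
      rw [hcc]
  -- expand COV4
  have hgoal : COV4 μ m' s = (1 / ((p : ℝ) + 2)) *
      ∫ x, (dotProduct (fun i => x i - v i)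
          ((COV μ)⁻¹.mulVec fun i => x i - v i)) *
        ((x m' - v m') * (x s - v s)) ∂μ := rfl
  rw [hgoal]
  congr 1
  have hfun4 : ∀ (a b d e : Fin p) (x : Fin p → ℝ),
      (x a - v a) * (x b - v b) * (x d - v d) * (x e - v e)
        = ∏ c, (x c - v c) ^ (((a :: b :: d :: e :: []) : List (Fin p)).count c) := by
    intro a b d e x
    have hpc := Cov4Aux.prod_count (fun c => x c - v c) (a :: b :: d :: e :: [])
    rw [← hpc]
    simp only [List.map_cons, List.map_nil, List.prod_cons, List.prod_nil, mul_one]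
    ring
  have hintegrand : (fun x : Fin p → ℝ => (dotProduct (fun i => x i - v i)
        ((COV μ)⁻¹.mulVec fun i => x i - v i)) * ((x m' - v m') * (x s - v s)))
      = fun x => ∑ i, ∑ j, (COV μ)⁻¹ i j *
          ∏ c, (x c - v c) ^ (((i :: j :: m' :: s :: []) : List (Fin p)).count c) := by
    funext x
    simp only [dotProduct, Matrix.mulVec, Finset.sum_mul, Finset.mul_sum]
    refine Finset.sum_congr rfl fun i _ => ?_
    refine Finset.sum_congr rfl fun j _ => ?_
    rw [← hfun4 i j m' s x]
    ring
  rw [hintegrand]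
  rw [integral_finset_sum _ (fun i _ => (integrable_finset_sum _
    (fun j _ => (hIntμ v (i :: j :: m' :: s :: [])).const_mul _) : Integrable (fun x => ∑ j, (COV μ)⁻¹ i j *
      ∏ c, (x c - v c) ^ (((i :: j :: m' :: s :: []) : List (Fin p)).count c)) μ))]
  have hswap2 : ∀ i : Fin p, ∫ x, (∑ j, (COV μ)⁻¹ i j *
      ∏ c, (x c - v c) ^ (((i :: j :: m' :: s :: []) : List (Fin p)).count c)) ∂μ
      = ∑ j, (COV μ)⁻¹ i j *
        ∫ x, ∏ c, (x c - v c) ^ (((i :: j :: m' :: s :: []) : List (Fin p)).count c) ∂μ := by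
    intro i
    rw [integral_finset_sum _ (fun j _ => (hIntμ v (i :: j :: m' :: s :: [])).const_mul _)]
    refine Finset.sum_congr rfl fun j _ => ?_
    exact integral_const_mul _ _
  simp only [hswap2]
  -- split the double sum
  rw [← Finset.sum_filter_add_sum_filter_not Finset.univ (fun i : Fin p => (i : ℕ) < q)
    (fun i => ∑ j, (COV μ)⁻¹ i j *
      ∫ x, ∏ c, (x c - v c) ^ (((i :: j :: m' :: s :: []) : List (Fin p)).count c) ∂μ)]
  congr 1
  · -- low-index block
    refine Finset.sum_congr rfl fun i hiQ => ?_
    have hiq : (i : ℕ) < q := (Finset.mem_filter.mp hiQ).2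
    rw [← Finset.sum_filter_add_sum_filter_not Finset.univ (fun j : Fin p => (j : ℕ) < q)
      (fun j => (COV μ)⁻¹ i j *
        ∫ x, ∏ c, (x c - v c) ^ (((i :: j :: m' :: s :: []) : List (Fin p)).count c) ∂μ)]
    have hzero : ∑ j ∈ Finset.univ.filter (fun j : Fin p => ¬ (j : ℕ) < q),
        (COV μ)⁻¹ i j *
          ∫ x, ∏ c, (x c - v c) ^ (((i :: j :: m' :: s :: []) : List (Fin p)).count c) ∂μ = 0 := by
      refine Finset.sum_eq_zero fun j hj => ?_
      have hjq : q ≤ (j : ℕ) := le_of_not_gt (Finset.mem_filter.mp hj).2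
      rw [hBcol i j hjq, if_neg, zero_mul]
      intro h
      rw [h] at hiq
      omega
    rw [hzero, add_zero]
    refine Finset.sum_congr rfl fun j hjQ => ?_
    congr 1
    rw [show (fun x : Fin p → ℝ => (x m' - v m') * (x s - v s) * (x i - v i) * (x j - v j))
        = fun x => ∏ c, (x c - v c) ^ (((i :: j :: m' :: s :: []) : List (Fin p)).count c) from ?_]
    · funext x
      rw [hfun4 m' s i j x]
      refine Finset.prod_congr rfl fun c _ => ?_
      congr 1
      simp only [List.count_cons, List.count_nil]
      ring
  · -- high-index block
    have hrow : ∀ i ∈ Finset.univ.filter (fun i : Fin p => ¬ (i : ℕ) < q),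
        (∑ j, (COV μ)⁻¹ i j *
          ∫ x, ∏ c, (x c - v c) ^ (((i :: j :: m' :: s :: []) : List (Fin p)).count c) ∂μ)
        = ∫ x, (x m' - v m') * (x s - v s) ∂μ := by
      intro i hi
      have hiq : q ≤ (i : ℕ) := le_of_not_gt (Finset.mem_filter.mp hi).2
      have hstep : ∀ j : Fin p, (COV μ)⁻¹ i j *
          ∫ x, ∏ c, (x c - v c) ^ (((i :: j :: m' :: s :: []) : List (Fin p)).count c) ∂μ
          = if i = j then
              ∫ x, ∏ c, (x c - v c) ^ (((i :: j :: m' :: s :: []) : List (Fin p)).count c) ∂μ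
            else 0 := by
        intro j
        rw [hBrow i j hiq]
        split_ifs <;> simp
      simp only [hstep]
      rw [Finset.sum_ite_eq Finset.univ i (fun j =>
        ∫ x, ∏ c, (x c - v c) ^ (((i :: j :: m' :: s :: []) : List (Fin p)).count c) ∂μ)]
      simp only [Finset.mem_univ, if_pos]
      rw [hF1 i hiq]
      congr 1
      funext x
      have e := Cov4Aux.prod_count (fun c => x c - v c) (m' :: s :: [])
      rw [← e]
      simp
    rw [Finset.sum_congr rfl hrow, Finset.sum_const, Cov4Aux.filter_not_lt_card hqp.le,
      nsmul_eq_mul, Nat.cast_sub hqp.le]
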